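/- Let w_1 ∈ K and let (g_t)_{t≥1} be arbitrary vectors of H. Define G_t = √(∑_{τ=1}^t ‖g_τ‖²), and define the iterates by w_{t+1} = Π_K(w_t − η_t g_t) with adaptive step size η_t = D/(√2 · G_t) whenever G_t > 0, and w_{t+1} = w_t whenever G_t = 0. Then for every w* ∈ K and every T ≥ 1, ∑_{t=1}^T ⟨g_t, w_t − w*⟩ ≤ √2 · D · √(∑_{t=1}^T ‖g_t‖²). -/

import Mathlib

open Finset
open scoped RealInnerProductSpace

/-- Abel summation bound. -/
theorem my_abel_aux (a b : ℕ → ℝ) (M : ℝ)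
    (ha0 : ∀ t, 1 ≤ t → 0 ≤ a t)
    (hamono : ∀ t, 1 ≤ t → a t ≤ a (t+1))
    (hbM : ∀ t, 1 ≤ t → b t ≤ M)
    (hb0 : ∀ t, 0 ≤ b t)
    (T : ℕ) (hT : 1 ≤ T) :
    ∑ t ∈ Icc 1 T, a t * (b t - b (t+1)) ≤ a T * M - a T * b (T+1) := by
  induction T, hT using Nat.le_induction with
  | base =>
    simp only [Icc_self, sum_singleton]
    nlinarith [ha0 1 le_rfl, hbM 1 le_rfl, hb0 2]
  | succ n hn ih =>
    rw [Finset.sum_Icc_succ_top (by omega : 1 ≤ n + 1)]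
    have h1 := ha0 n hn
    have h2 := hamono n hn
    have h3 := hbM (n+1) (by omega)
    have h4 := hb0 (n+2)
    have h5 := hb0 (n+1)
    nlinarith

/-- `∑_{t≤T} c_t / √(∑_{τ≤t} c_τ) ≤ 2 √(∑_{t≤T} c_t)` for nonnegative `c`. -/
theorem my_sum_div_sqrt (c : ℕ → ℝ) (hc : ∀ t, 0 ≤ c t) (T : ℕ) :
    ∑ t ∈ Icc 1 T, c t / Real.sqrt (∑ τ ∈ Icc 1 t, c τ) ≤
      2 * Real.sqrt (∑ t ∈ Icc 1 T, c t) := by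
  induction T with
  | zero => simp
  | succ n ih =>
    rw [Finset.sum_Icc_succ_top (by omega : 1 ≤ n + 1),
        Finset.sum_Icc_succ_top (by omega : 1 ≤ n + 1)]
    have hS : (0:ℝ) ≤ ∑ τ ∈ Icc 1 n, c τ := Finset.sum_nonneg fun i _ => hc i
    set S := ∑ τ ∈ Icc 1 n, c τ with hSdef
    have hc' := hc (n+1)
    rcases eq_or_lt_of_le (by positivity : (0:ℝ) ≤ S + c (n+1)) with h0 | h0
    · have hS0 : S = 0 := by nlinarith
      have hc0 : c (n+1) = 0 := by nlinarith
      simp only [hc0, ← h0]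
      simpa [hS0] using ih
    · have hy : 0 < Real.sqrt (S + c (n+1)) := Real.sqrt_pos.mpr h0
      have hx : 0 ≤ Real.sqrt S := Real.sqrt_nonneg S
      have hxy : Real.sqrt S ≤ Real.sqrt (S + c (n+1)) :=
        Real.sqrt_le_sqrt (by linarith)
      have hx2 : Real.sqrt S ^ 2 = S := Real.sq_sqrt hS
      have hy2 : Real.sqrt (S + c (n+1)) ^ 2 = S + c (n+1) :=
        Real.sq_sqrt (by linarith)
      have key : c (n+1) / Real.sqrt (S + c (n+1)) ≤
          2 * Real.sqrt (S + c (n+1)) - 2 * Real.sqrt S := by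
        rw [div_le_iff₀ hy]
        nlinarith [sq_nonneg (Real.sqrt (S + c (n+1)) - Real.sqrt S)]
      linarith [ih]

/-- A distance-minimizing map onto a convex set is nonexpansive toward points of the set. -/
theorem my_nonexp {H : Type*} [NormedAddCommGroup H] [InnerProductSpace ℝ H]
    (K : Set H) (hKconvex : Convex ℝ K)
    (proj : H → H)
    (hproj_mem : ∀ v, proj v ∈ K)
    (hproj_min : ∀ v, ∀ u ∈ K, ‖v - proj v‖ ≤ ‖v - u‖) :
    ∀ v, ∀ u ∈ K, ‖proj v - u‖ ≤ ‖v - u‖ := by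
  intro v u hu
  haveI : Nonempty K := ⟨⟨proj v, hproj_mem v⟩⟩
  have hinf : ‖v - proj v‖ = ⨅ w : K, ‖v - w‖ := by
    apply le_antisymm
    · exact le_ciInf fun x => hproj_min v x x.2
    · have hbdd : BddBelow (Set.range fun w : K => ‖v - (w:H)‖) :=
        ⟨0, by rintro y ⟨x, rfl⟩; exact norm_nonneg _⟩
      exact ciInf_le hbdd ⟨proj v, hproj_mem v⟩
  have hchar := (norm_eq_iInf_iff_real_inner_le_zero hKconvex (hproj_mem v)).1 hinf u hu
  have hexp : ‖v - u‖ ^ 2 =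
      ‖v - proj v‖ ^ 2 + 2 * ⟪v - proj v, proj v - u⟫ + ‖proj v - u‖ ^ 2 := by
    have : v - u = (v - proj v) + (proj v - u) := by abel
    rw [this, norm_add_sq_real]
  have h2 : ⟪v - proj v, proj v - u⟫ = - ⟪v - proj v, u - proj v⟫ := by
    rw [← inner_neg_right]; congr 1; abel
  have hsq : ‖proj v - u‖ ^ 2 ≤ ‖v - u‖ ^ 2 := by
    nlinarith [sq_nonneg ‖v - proj v‖]
  calc ‖proj v - u‖ = Real.sqrt (‖proj v - u‖ ^ 2) := (Real.sqrt_sq (norm_nonneg _)).symm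
    _ ≤ Real.sqrt (‖v - u‖ ^ 2) := Real.sqrt_le_sqrt hsq
    _ = ‖v - u‖ := Real.sqrt_sq (norm_nonneg _)

/-- regret bound for projected sub-gradient descent with the
adaptive step sizes `η_t = D / (√2 · G_t)`, `G_t = √(∑_{τ≤t} ‖g_τ‖²)`. -/
theorem stmt1
    {H : Type*} [NormedAddCommGroup H] [InnerProductSpace ℝ H]
    (K : Set H) (hKne : K.Nonempty) (hKclosed : IsClosed K) (hKconvex : Convex ℝ K)
    (D : ℝ) (hD : ∀ w ∈ K, ∀ v ∈ K, ‖w - v‖ ≤ D)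
    (proj : H → H)
    (hproj_mem : ∀ v, proj v ∈ K)
    (hproj_min : ∀ v, ∀ u ∈ K, ‖v - proj v‖ ≤ ‖v - u‖)
    (g : ℕ → H)
    (G : ℕ → ℝ) (hG : ∀ t, G t = Real.sqrt (∑ τ ∈ Icc 1 t, ‖g τ‖ ^ 2))
    (w : ℕ → H) (hw1 : w 1 ∈ K)
    (hiter_pos : ∀ t, 1 ≤ t → 0 < G t →
      w (t + 1) = proj (w t - (D / (Real.sqrt 2 * G t)) • g t))
    (hiter_zero : ∀ t, 1 ≤ t → G t = 0 → w (t + 1) = w t)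
    (wstar : H) (hwstar : wstar ∈ K)
    (T : ℕ) (hT : 1 ≤ T) :
    (∑ t ∈ Icc 1 T, ⟪g t, w t - wstar⟫) ≤
      Real.sqrt 2 * D * Real.sqrt (∑ t ∈ Icc 1 T, ‖g t‖ ^ 2) := by
  have s2pos : (0:ℝ) < Real.sqrt 2 := Real.sqrt_pos.mpr (by norm_num)
  have hGnn : ∀ t, 0 ≤ G t := fun t => (hG t) ▸ Real.sqrt_nonneg _
  have hGmono : ∀ t, G t ≤ G (t+1) := by
    intro t
    rw [hG, hG]
    apply Real.sqrt_le_sqrt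
    apply Finset.sum_le_sum_of_subset_of_nonneg (Icc_subset_Icc_right (by omega))
    intro i _ _; positivity
  have hgz : ∀ t, 1 ≤ t → G t = 0 → g t = 0 := by
    intro t ht h0
    have hS0 : (∑ τ ∈ Icc 1 t, ‖g τ‖ ^ 2) = 0 := by
      have := hG t
      rw [h0] at this
      have hSnn : (0:ℝ) ≤ ∑ τ ∈ Icc 1 t, ‖g τ‖ ^ 2 :=
        Finset.sum_nonneg fun i _ => by positivity
      nlinarith [Real.sq_sqrt hSnn]
    have hmem : t ∈ Icc 1 t := by simp [ht]
    have : ‖g t‖ ^ 2 = 0 := by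
      have h := Finset.sum_eq_zero_iff_of_nonneg
        (fun i _ => by positivity : ∀ i ∈ Icc 1 t, (0:ℝ) ≤ ‖g i‖ ^ 2) |>.1 hS0 t hmem
      exact h
    simpa [pow_eq_zero_iff, norm_eq_zero] using this
  have hmemK : ∀ t, 1 ≤ t → w t ∈ K := by
    intro t ht
    induction t, ht using Nat.le_induction with
    | base => exact hw1
    | succ n hn ih =>
      rcases eq_or_lt_of_le (hGnn n) with h0 | h0
      · rw [hiter_zero n hn h0.symm]; exact ih
      · rw [hiter_pos n hn h0]; exact hproj_mem _
  have hDnn : 0 ≤ D := by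
    have := hD (w 1) hw1 (w 1) hw1
    simpa using this
  rcases eq_or_lt_of_le hDnn with hD0 | hDpos
  · -- degenerate case D = 0: K is a single point
    have hzero : ∀ t ∈ Icc 1 T, ⟪g t, w t - wstar⟫ = 0 := by
      intro t ht
      have ht1 : 1 ≤ t := (mem_Icc.1 ht).1
      have := hD (w t) (hmemK t ht1) wstar hwstar
      have hwt : w t - wstar = 0 := by
        rw [← norm_le_zero_iff]; exact hD0 ▸ this
      rw [hwt, inner_zero_right]
    rw [Finset.sum_eq_zero hzero, ← hD0]
    simp
  · -- main case D > 0
    have hnonexp := my_nonexp K hKconvex proj hproj_mem hproj_min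
    set a : ℕ → ℝ := fun t => Real.sqrt 2 * G t / (2 * D) with hadef
    set b : ℕ → ℝ := fun t => ‖w t - wstar‖ ^ 2 with hbdef
    set C : ℝ := D / (2 * Real.sqrt 2) with hCdef
    have key : ∀ t, 1 ≤ t →
        ⟪g t, w t - wstar⟫ ≤ a t * (b t - b (t+1)) + C * (‖g t‖ ^ 2 / G t) := by
      intro t ht
      rcases eq_or_lt_of_le (hGnn t) with h0 | h0
      · have hg0 : g t = 0 := hgz t ht h0.symm
        have hw' : w (t+1) = w t := hiter_zero t ht h0.symm
        simp [hg0, hw', hbdef]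
      · set η : ℝ := D / (Real.sqrt 2 * G t) with hηdef
        have hηpos : 0 < η := by positivity
        have hstep := hiter_pos t ht h0
        have hne : ‖w (t+1) - wstar‖ ≤ ‖w t - η • g t - wstar‖ := by
          rw [hstep]; exact hnonexp _ wstar hwstar
        have hsq : b (t+1) ≤ ‖w t - η • g t - wstar‖ ^ 2 := by
          have := pow_le_pow_left₀ (norm_nonneg _) hne 2
          simpa [hbdef] using this
        have hexp : ‖w t - η • g t - wstar‖ ^ 2 =
            b t - 2 * η * ⟪g t, w t - wstar⟫ + η ^ 2 * ‖g t‖ ^ 2 := by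
          have hrw : w t - η • g t - wstar = (w t - wstar) - η • g t := by abel
          rw [hrw, norm_sub_sq_real, real_inner_smul_right, norm_smul,
            real_inner_comm]
          simp [hbdef, abs_of_pos hηpos, mul_pow]
          ring
        have hbound : b (t+1) ≤ b t - 2 * η * ⟪g t, w t - wstar⟫ + η ^ 2 * ‖g t‖ ^ 2 := by
          rw [← hexp]; exact hsq
        have h2η : 0 < 2 * η := by linarith
        have hmain : ⟪g t, w t - wstar⟫ ≤
            1 / (2 * η) * (b t - b (t+1)) + η / 2 * ‖g t‖ ^ 2 := by
          have h2 : 2 * η * ⟪g t, w t - wstar⟫ ≤ (b t - b (t+1)) + η ^ 2 * ‖g t‖ ^ 2 := by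
            linarith
          calc ⟪g t, w t - wstar⟫ = (2 * η * ⟪g t, w t - wstar⟫) / (2 * η) := by
                field_simp
            _ ≤ ((b t - b (t+1)) + η ^ 2 * ‖g t‖ ^ 2) / (2 * η) := by gcongr
            _ = 1 / (2 * η) * (b t - b (t+1)) + η / 2 * ‖g t‖ ^ 2 := by
                field_simp
        have e1 : a t = 1 / (2 * η) := by
          rw [hadef, hηdef]
          field_simp
        have e2 : C * (‖g t‖ ^ 2 / G t) = η / 2 * ‖g t‖ ^ 2 := by
          have hGne : G t ≠ 0 := ne_of_gt h0
          have hs2ne : Real.sqrt 2 ≠ 0 := ne_of_gt s2pos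
          rw [hCdef, hηdef]
          field_simp
        rw [e1, e2]
        exact hmain
    have hCnn : 0 ≤ C := by rw [hCdef]; positivity
    have h2 : Real.sqrt 2 * Real.sqrt 2 = 2 := Real.mul_self_sqrt (by norm_num)
    have habel : ∑ t ∈ Icc 1 T, a t * (b t - b (t+1)) ≤ a T * D^2 - a T * b (T+1) := by
      apply my_abel_aux
      · intro t _; simp only [hadef]
        exact div_nonneg (mul_nonneg s2pos.le (hGnn t)) (by linarith)
      · intro t _
        simp only [hadef]
        have h := hGmono t
        gcongr
      · intro t ht
        have h1 : ‖w t - wstar‖ ≤ D := hD (w t) (hmemK t ht) wstar hwstar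
        have := pow_le_pow_left₀ (norm_nonneg _) h1 2
        simpa [hbdef] using this
      · intro t; simp only [hbdef]; positivity
      · exact hT
    have hsum2 : ∑ t ∈ Icc 1 T, ‖g t‖ ^ 2 / G t ≤ 2 * G T := by
      have hq := my_sum_div_sqrt (fun t => ‖g t‖ ^ 2) (fun t => by positivity) T
      rw [hG T]
      calc ∑ t ∈ Icc 1 T, ‖g t‖ ^ 2 / G t
          = ∑ t ∈ Icc 1 T, ‖g t‖ ^ 2 / Real.sqrt (∑ τ ∈ Icc 1 t, ‖g τ‖ ^ 2) :=
            Finset.sum_congr rfl fun t _ => by rw [hG t]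
        _ ≤ 2 * Real.sqrt (∑ t ∈ Icc 1 T, ‖g t‖ ^ 2) := hq
    have haTnn : 0 ≤ a T := by
      simp only [hadef]
      exact div_nonneg (mul_nonneg s2pos.le (hGnn T)) (by linarith)
    have hbT1 : 0 ≤ b (T+1) := by simp only [hbdef]; positivity
    have hfinal : a T * D ^ 2 + C * (2 * G T) = Real.sqrt 2 * D * G T := by
      rw [hadef, hCdef]
      field_simp
      linear_combination (-G T) * h2
    calc (∑ t ∈ Icc 1 T, ⟪g t, w t - wstar⟫)
        ≤ ∑ t ∈ Icc 1 T, (a t * (b t - b (t+1)) + C * (‖g t‖ ^ 2 / G t)) :=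
          Finset.sum_le_sum fun t ht => key t (mem_Icc.1 ht).1
      _ = (∑ t ∈ Icc 1 T, a t * (b t - b (t+1))) + C * ∑ t ∈ Icc 1 T, ‖g t‖ ^ 2 / G t := by
          rw [Finset.sum_add_distrib, Finset.mul_sum]
      _ ≤ (a T * D ^ 2 - a T * b (T+1)) + C * (2 * G T) :=
          add_le_add habel (mul_le_mul_of_nonneg_left hsum2 hCnn)
      _ ≤ a T * D ^ 2 + C * (2 * G T) := by nlinarith
      _ = Real.sqrt 2 * D * G T := hfinal
      _ = Real.sqrt 2 * D * Real.sqrt (∑ t ∈ Icc 1 T, ‖g t‖ ^ 2) := by rw [hG T]
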